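/- Let d ≥ 2 be an integer, β > 0, and let x, y ∈ ℝ^d be unit vectors with z = ⟨x, y⟩. Define a' = (e^β x + e^{βz} y)/(e^β + e^{βz}) and b' = (e^β y + e^{βz} x)/(e^β + e^{βz}). Then: (i) ((1 − d)/2)·z·(‖a'‖² + ‖b'‖²) + (z² + d − 2)·⟨a', b'⟩ = (1 − z²)·( 2(d − 2) e^{β(1+z)} − z (e^{2β} + e^{2βz}) ) / (e^β + e^{βz})²; and (ii) (1 − z²)·( ‖a'‖² + ‖b'‖² − 2z⟨a', b'⟩ ) = 2 (1 − z²)²·( e^{2β} + e^{2βz} ) / (e^β + e^{βz})². -/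
import Mathlib


open RealInnerProductSpace Real

/-- Explicit overlap drift and squared diffusion coefficient for two tokens with
normalized (softmax) self-attention: with `z = ⟨x, y⟩`,
`a' = (e^β x + e^{βz} y)/(e^β + e^{βz})`, `b' = (e^β y + e^{βz} x)/(e^β + e^{βz})`,
(i) `((1−d)/2) z (‖a'‖² + ‖b'‖²) + (z² + d − 2)⟨a', b'⟩
  = (1 − z²)(2(d−2)e^{β(1+z)} − z(e^{2β} + e^{2βz})) / (e^β + e^{βz})²`;
(ii) `(1 − z²)(‖a'‖² + ‖b'‖² − 2z⟨a', b'⟩) = 2(1 − z²)²(e^{2β} + e^{2βz}) / (e^β + e^{βz})²`. -/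
theorem overlap_coefficients_normalized (d : ℕ) (hd : 2 ≤ d) (β : ℝ) (hβ : 0 < β)
    (x y : EuclideanSpace ℝ (Fin d)) (hx : ‖x‖ = 1) (hy : ‖y‖ = 1)
    (z : ℝ) (hz : z = ⟪x, y⟫)
    (a' b' : EuclideanSpace ℝ (Fin d))
    (ha : a' = (exp β + exp (β * z))⁻¹ • (exp β • x + exp (β * z) • y))
    (hb : b' = (exp β + exp (β * z))⁻¹ • (exp β • y + exp (β * z) • x)) :
    (((1 - (d : ℝ)) / 2) * z * (‖a'‖ ^ 2 + ‖b'‖ ^ 2) + (z ^ 2 + d - 2) * ⟪a', b'⟫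
        = (1 - z ^ 2)
            * (2 * ((d : ℝ) - 2) * exp (β * (1 + z)) - z * (exp (2 * β) + exp (2 * β * z)))
            / (exp β + exp (β * z)) ^ 2) ∧
    ((1 - z ^ 2) * (‖a'‖ ^ 2 + ‖b'‖ ^ 2 - 2 * z * ⟪a', b'⟫)
        = 2 * (1 - z ^ 2) ^ 2 * (exp (2 * β) + exp (2 * β * z))
            / (exp β + exp (β * z)) ^ 2) := by
  have hxx : ⟪x, x⟫ = 1 := by
    rw [real_inner_self_eq_norm_sq, hx]; norm_num
  have hyy : ⟪y, y⟫ = 1 := by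
    rw [real_inner_self_eq_norm_sq, hy]; norm_num
  have hyx : ⟪y, x⟫ = z := by rw [real_inner_comm, ← hz]
  have hs : exp β + exp (β * z) ≠ 0 := by positivity
  have hna : ‖a'‖ ^ 2 = ⟪a', a'⟫ := (real_inner_self_eq_norm_sq a').symm
  have hnb : ‖b'‖ ^ 2 = ⟪b', b'⟫ := (real_inner_self_eq_norm_sq b').symm
  have e1 : exp (2 * β) = exp β * exp β := by rw [← exp_add]; ring_nf
  have e2 : exp (2 * β * z) = exp (β * z) * exp (β * z) := by rw [← exp_add]; ring_nf
  have e3 : exp (β * (1 + z)) = exp β * exp (β * z) := by rw [← exp_add]; ring_nf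
  constructor <;>
  · rw [hna, hnb]
    simp only [ha, hb, inner_smul_left, inner_smul_right, inner_add_left,
      inner_add_right, hxx, hyy, hyx, ← hz, e1, e2, e3, RCLike.conj_to_real, map_inv₀]
    field_simp
    ring
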